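/- If ⊗ is the tensor product of a closed symmetric monoidal structure on the category Graph of reflexive graphs, then ⊗ is naturally isomorphic either to the box product □ or to the categorical product ⊠; hence Graph carries, up to isomorphism of the tensor product, exactly two closed symmetric monoidal structures, namely the box product and the categorical product, each with unit the one-vertex graph I_0. -/

import Mathlib

set_option linter.unusedVariables false


open CategoryTheory MonoidalCategory

/-- The category of (reflexive) graphs: an object is a set of vertices with an
irreflexive symmetric adjacency relation. -/
structure GraphCat : Type 1 where
  V : Type
  adj : V → V → Prop
  symm : ∀ {v w : V}, adj v w → adj w v
  loopless : ∀ v : V, ¬ adj v v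

namespace GraphCat

/-- A graph map: whenever `v ∼ w`, either `f v = f w` or `f v ∼ f w`. -/
structure Hom (X Y : GraphCat) where
  toFun : X.V → Y.V
  map_adj : ∀ {v w : X.V}, X.adj v w → toFun v = toFun w ∨ Y.adj (toFun v) (toFun w)

theorem Hom.ext' {X Y : GraphCat} {f g : Hom X Y} (h : f.toFun = g.toFun) : f = g := by
  cases f; cases g; cases h; rfl

instance : Category GraphCat where
  Hom := Hom
  id X := ⟨fun v => v, fun h => Or.inr h⟩
  comp f g := ⟨fun v => g.toFun (f.toFun v), fun {v w} h => by
    rcases f.map_adj h with h' | h'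
    · exact Or.inl (congrArg g.toFun h')
    · exact g.map_adj h'⟩
  id_comp f := Hom.ext' rfl
  comp_id f := Hom.ext' rfl
  assoc f g h := Hom.ext' rfl

/-- The one-vertex graph `I₀`. -/
def I0 : GraphCat := ⟨PUnit, fun _ _ => False, fun h => h, fun _ h => h⟩

/-- The graph `I₁` with two vertices `s = false` and `t = true` joined by an edge. -/
def I1 : GraphCat := ⟨Bool, fun v w => v ≠ w, Ne.symm, fun _ h => h rfl⟩

/-- The box product of graphs: `(v,v') ∼ (w,w')` iff (`v ∼ w` and `v' = w'`) or
(`v = w` and `v' ∼ w'`). -/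
def boxProd (X Y : GraphCat) : GraphCat where
  V := X.V × Y.V
  adj p q := (X.adj p.1 q.1 ∧ p.2 = q.2) ∨ (p.1 = q.1 ∧ Y.adj p.2 q.2)
  symm := by
    rintro p q (⟨h, e⟩ | ⟨e, h⟩)
    · exact Or.inl ⟨X.symm h, e.symm⟩
    · exact Or.inr ⟨e.symm, Y.symm h⟩
  loopless := by
    rintro p (⟨h, _⟩ | ⟨_, h⟩)
    · exact X.loopless _ h
    · exact Y.loopless _ h

/-- The categorical product of graphs: `(v,v') ∼ (w,w')` iff `(v,v') ≠ (w,w')` and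
(`v = w` or `v ∼ w`) and (`v' = w'` or `v' ∼ w'`). -/
def catProd (X Y : GraphCat) : GraphCat where
  V := X.V × Y.V
  adj p q := p ≠ q ∧ (p.1 = q.1 ∨ X.adj p.1 q.1) ∧ (p.2 = q.2 ∨ Y.adj p.2 q.2)
  symm := by
    rintro p q ⟨hne, h1, h2⟩
    refine ⟨hne.symm, ?_, ?_⟩
    · rcases h1 with e | h
      exacts [Or.inl e.symm, Or.inr (X.symm h)]
    · rcases h2 with e | h
      exacts [Or.inl e.symm, Or.inr (Y.symm h)]
  loopless := fun p h => h.1 rfl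

/-- The box product as a bifunctor `Graph × Graph ⥤ Graph`. -/
def boxFunctor : GraphCat × GraphCat ⥤ GraphCat where
  obj p := boxProd p.1 p.2
  map {p q} f :=
    { toFun := fun v => (f.1.toFun v.1, f.2.toFun v.2)
      map_adj := by
        rintro ⟨v, v'⟩ ⟨w, w'⟩ (⟨h, e⟩ | ⟨e, h⟩)
        · rcases f.1.map_adj h with e' | a
          · exact Or.inl (Prod.ext e' (congrArg f.2.toFun e))
          · exact Or.inr (Or.inl ⟨a, congrArg f.2.toFun e⟩)
        · rcases f.2.map_adj h with e' | a
          · exact Or.inl (Prod.ext (congrArg f.1.toFun e) e')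
          · exact Or.inr (Or.inr ⟨congrArg f.1.toFun e, a⟩) }
  map_id := by intro p; apply Hom.ext'; funext v; rfl
  map_comp := by intros; apply Hom.ext'; funext v; rfl

/-- The categorical product as a bifunctor `Graph × Graph ⥤ Graph`. -/
def catFunctor : GraphCat × GraphCat ⥤ GraphCat where
  obj p := catProd p.1 p.2
  map {p q} f :=
    { toFun := fun v => (f.1.toFun v.1, f.2.toFun v.2)
      map_adj := by
        rintro ⟨v, v'⟩ ⟨w, w'⟩ ⟨hne, h1, h2⟩
        have h1' : f.1.toFun v = f.1.toFun w ∨ q.1.adj (f.1.toFun v) (f.1.toFun w) := by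
          rcases h1 with e | a
          · exact Or.inl (congrArg f.1.toFun e)
          · exact f.1.map_adj a
        have h2' : f.2.toFun v' = f.2.toFun w' ∨ q.2.adj (f.2.toFun v') (f.2.toFun w') := by
          rcases h2 with e | a
          · exact Or.inl (congrArg f.2.toFun e)
          · exact f.2.map_adj a
        by_cases hq : ((f.1.toFun v, f.2.toFun v') : q.1.V × q.2.V)
            = (f.1.toFun w, f.2.toFun w')
        · exact Or.inl hq
        · exact Or.inr ⟨hq, h1', h2'⟩ }
  map_id := by intro p; apply Hom.ext'; funext v; rfl
  map_comp := by intros; apply Hom.ext'; funext v; rfl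

end GraphCat

namespace GraphCat

@[simp] lemma comp_toFun {X Y Z : GraphCat} (f : X ⟶ Y) (g : Y ⟶ Z) (v : X.V) :
    (f ≫ g).toFun v = g.toFun (f.toFun v) := rfl

@[simp] lemma id_toFun (X : GraphCat) (v : X.V) : (𝟙 X : X ⟶ X).toFun v = v := rfl

lemma hom_ext {X Y : GraphCat} {f g : X ⟶ Y} (h : ∀ v, f.toFun v = g.toFun v) : f = g :=
  Hom.ext' (funext h)

/-! ### The box monoidal structure -/

def boxStruct : MonoidalCategoryStruct GraphCat where
  tensorObj := boxProd
  tensorHom f g := boxFunctor.map ((f, g) : (_, _) ⟶ (_, _))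
  whiskerLeft X _ _ g := boxFunctor.map ((𝟙 X, g) : (_, _) ⟶ (_, _))
  whiskerRight f Y := boxFunctor.map ((f, 𝟙 Y) : (_, _) ⟶ (_, _))
  tensorUnit := I0
  associator X Y Z :=
    { hom := ⟨fun v => (v.1.1, (v.1.2, v.2)), by
        rintro ⟨⟨a,b⟩,c⟩ ⟨⟨a',b'⟩,c'⟩ h
        right
        simp only [boxProd, Prod.mk.injEq] at h ⊢
        tauto⟩
      inv := ⟨fun v => ((v.1, v.2.1), v.2.2), by
        rintro ⟨a,⟨b,c⟩⟩ ⟨a',⟨b',c'⟩⟩ h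
        right
        simp only [boxProd, Prod.mk.injEq] at h ⊢
        tauto⟩
      hom_inv_id := hom_ext fun v => rfl
      inv_hom_id := hom_ext fun v => rfl }
  leftUnitor X :=
    { hom := ⟨fun v => v.2, by
        rintro ⟨a,b⟩ ⟨a',b'⟩ h
        simp only [boxProd, I0] at h
        tauto⟩
      inv := ⟨fun v => (⟨⟩, v), by
        intro v w h
        right
        simp only [boxProd, I0]
        tauto⟩
      hom_inv_id := hom_ext fun v => rfl
      inv_hom_id := hom_ext fun v => rfl }
  rightUnitor X :=
    { hom := ⟨fun v => v.1, by
        rintro ⟨a,b⟩ ⟨a',b'⟩ h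
        simp only [boxProd, I0] at h
        tauto⟩
      inv := ⟨fun v => (v, ⟨⟩), by
        intro v w h
        right
        simp only [boxProd, I0]
        tauto⟩
      hom_inv_id := hom_ext fun v => rfl
      inv_hom_id := hom_ext fun v => rfl }

def boxMC : MonoidalCategory GraphCat :=
  letI := boxStruct
  MonoidalCategory.ofTensorHom
    (id_tensorHom_id := fun _ _ => hom_ext fun v => rfl)
    (id_tensorHom := fun X {_ _} f => rfl)
    (tensorHom_id := fun {_ _} f Y => rfl)
    (tensorHom_comp_tensorHom := fun _ _ _ _ => hom_ext fun v => rfl)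
    (associator_naturality := fun _ _ _ => hom_ext fun v => rfl)
    (leftUnitor_naturality := fun _ => hom_ext fun v => rfl)
    (rightUnitor_naturality := fun _ => hom_ext fun v => rfl)
    (pentagon := fun _ _ _ _ => hom_ext fun v => rfl)
    (triangle := fun _ _ => hom_ext fun v => rfl)

end GraphCat
namespace GraphCat

def boxSwap (X Y : GraphCat) : boxProd X Y ⟶ boxProd Y X :=
  ⟨fun v => (v.2, v.1), by
    rintro ⟨a,b⟩ ⟨a',b'⟩ h; right
    simp only [boxProd, Prod.mk.injEq] at h ⊢; tauto⟩

def boxSymm : @SymmetricCategory GraphCat _ boxMC := by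
  letI := boxMC
  exact
    { braiding := fun X Y =>
        show boxProd X Y ≅ boxProd Y X from
        { hom := boxSwap X Y
          inv := boxSwap Y X
          hom_inv_id := hom_ext fun v => rfl
          inv_hom_id := hom_ext fun v => rfl }
      braiding_naturality_right := fun X {_ _} f => hom_ext fun v => rfl
      braiding_naturality_left := fun {_ _} f Z => hom_ext fun v => rfl
      hexagon_forward := fun X Y Z => hom_ext fun v => rfl
      hexagon_reverse := fun X Y Z => hom_ext fun v => rfl
      symmetry := fun X Y => hom_ext fun v => rfl }

/-- Internal hom for the box product. -/
def boxIhomObj (X Z : GraphCat) : GraphCat where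
  V := X ⟶ Z
  adj g h := g ≠ h ∧ ∀ v, g.toFun v = h.toFun v ∨ Z.adj (g.toFun v) (h.toFun v)
  symm := by
    rintro g h ⟨hne, hadj⟩
    refine ⟨fun e => hne e.symm, fun v => ?_⟩
    rcases hadj v with e | a
    · exact Or.inl e.symm
    · exact Or.inr (Z.symm a)
  loopless := fun g h => h.1 rfl

def boxCurry0 {X Y Z : GraphCat} (f : boxProd X Y ⟶ Z) (y : Y.V) : X ⟶ Z :=
  ⟨fun x => f.toFun (x, y), fun hx => f.map_adj (Or.inl ⟨hx, rfl⟩)⟩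

def boxCurry {X Y Z : GraphCat} (f : boxProd X Y ⟶ Z) : Y ⟶ boxIhomObj X Z :=
  ⟨fun y => boxCurry0 f y, by
    intro y y' hy
    by_cases e : boxCurry0 f y = boxCurry0 f y'
    · exact Or.inl e
    · exact Or.inr ⟨e, fun x => f.map_adj (Or.inr ⟨rfl, hy⟩)⟩⟩

def boxUncurry {X Y Z : GraphCat} (g : Y ⟶ boxIhomObj X Z) : boxProd X Y ⟶ Z :=
  ⟨fun p => (g.toFun p.2).toFun p.1, by
    rintro ⟨x,y⟩ ⟨x',y'⟩ (⟨hx, rfl⟩ | ⟨rfl, hy⟩)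
    · exact (g.toFun y).map_adj hx
    · rcases g.map_adj hy with e | ⟨_, hadj⟩
      · exact Or.inl (congrArg (fun (h : Hom X Z) => h.toFun x) e)
      · exact hadj x⟩

def boxIhomMap (X : GraphCat) {Z Z' : GraphCat} (u : Z ⟶ Z') :
    boxIhomObj X Z ⟶ boxIhomObj X Z' :=
  ⟨fun g => g ≫ u, by
    rintro g h ⟨hne, hadj⟩
    by_cases e : g ≫ u = h ≫ u
    · exact Or.inl e
    · refine Or.inr ⟨e, fun v => ?_⟩
      rcases hadj v with e' | a
      · exact Or.inl (congrArg u.toFun e')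
      · exact u.map_adj a⟩

def boxClosed : @MonoidalClosed GraphCat _ boxMC := by
  letI := boxMC
  refine ⟨fun X => ?_⟩
  exact
    { rightAdj :=
        { obj := fun Z => boxIhomObj X Z
          map := fun {Z Z'} u => boxIhomMap X u
          map_id := fun Z => hom_ext fun g => by
            apply Hom.ext'; rfl
          map_comp := fun u u' => hom_ext fun g => by
            apply Hom.ext'; rfl }
      adj := Adjunction.mkOfHomEquiv
        { homEquiv := fun Y Z =>
            { toFun := fun f => boxCurry (show boxProd X Y ⟶ Z from f)
              invFun := fun g => boxUncurry g
              left_inv := fun f => hom_ext fun p => rfl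
              right_inv := fun g => hom_ext fun y => Hom.ext' rfl }
          homEquiv_naturality_left_symm := fun f g => hom_ext fun p => rfl
          homEquiv_naturality_right := fun f u => hom_ext fun y => Hom.ext' rfl } }

end GraphCat
namespace GraphCat

def catStruct : MonoidalCategoryStruct GraphCat where
  tensorObj := catProd
  tensorHom f g := catFunctor.map ((f, g) : (_, _) ⟶ (_, _))
  whiskerLeft X _ _ g := catFunctor.map ((𝟙 X, g) : (_, _) ⟶ (_, _))
  whiskerRight f Y := catFunctor.map ((f, 𝟙 Y) : (_, _) ⟶ (_, _))
  tensorUnit := I0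
  associator X Y Z :=
    { hom := ⟨fun v => (v.1.1, (v.1.2, v.2)), by
        rintro ⟨⟨a,b⟩,c⟩ ⟨⟨a',b'⟩,c'⟩ h
        right
        simp only [catProd, ne_eq, Prod.mk.injEq, not_and] at h ⊢
        tauto⟩
      inv := ⟨fun v => ((v.1, v.2.1), v.2.2), by
        rintro ⟨a,⟨b,c⟩⟩ ⟨a',⟨b',c'⟩⟩ h
        right
        simp only [catProd, ne_eq, Prod.mk.injEq, not_and] at h ⊢
        tauto⟩
      hom_inv_id := hom_ext fun v => rfl
      inv_hom_id := hom_ext fun v => rfl }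
  leftUnitor X :=
    { hom := ⟨fun v => v.2, by
        rintro ⟨a,b⟩ ⟨a',b'⟩ h
        rcases h with ⟨hne, h1, h2⟩
        rcases h2 with e | a2
        · exact Or.inl e
        · exact Or.inr a2⟩
      inv := ⟨fun v => (⟨⟩, v), by
        intro v w h
        right
        refine ⟨fun e => X.loopless v (by cases congrArg Prod.snd e; exact h), Or.inl rfl, Or.inr h⟩⟩
      hom_inv_id := hom_ext fun v => rfl
      inv_hom_id := hom_ext fun v => rfl }
  rightUnitor X :=
    { hom := ⟨fun v => v.1, by
        rintro ⟨a,b⟩ ⟨a',b'⟩ h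
        rcases h with ⟨hne, h1, h2⟩
        rcases h1 with e | a1
        · exact Or.inl e
        · exact Or.inr a1⟩
      inv := ⟨fun v => (v, ⟨⟩), by
        intro v w h
        right
        refine ⟨fun e => X.loopless v (by cases congrArg Prod.fst e; exact h), Or.inr h, Or.inl rfl⟩⟩
      hom_inv_id := hom_ext fun v => rfl
      inv_hom_id := hom_ext fun v => rfl }

def catMC : MonoidalCategory GraphCat :=
  letI := catStruct
  MonoidalCategory.ofTensorHom
    (id_tensorHom_id := fun _ _ => hom_ext fun v => rfl)
    (id_tensorHom := fun X {_ _} f => rfl)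
    (tensorHom_id := fun {_ _} f Y => rfl)
    (tensorHom_comp_tensorHom := fun _ _ _ _ => hom_ext fun v => rfl)
    (associator_naturality := fun _ _ _ => hom_ext fun v => rfl)
    (leftUnitor_naturality := fun _ => hom_ext fun v => rfl)
    (rightUnitor_naturality := fun _ => hom_ext fun v => rfl)
    (pentagon := fun _ _ _ _ => hom_ext fun v => rfl)
    (triangle := fun _ _ => hom_ext fun v => rfl)

def catSwap (X Y : GraphCat) : catProd X Y ⟶ catProd Y X :=
  ⟨fun v => (v.2, v.1), by
    rintro ⟨a,b⟩ ⟨a',b'⟩ h; right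
    simp only [catProd, ne_eq, Prod.mk.injEq, not_and] at h ⊢; tauto⟩

def catSymm : @SymmetricCategory GraphCat _ catMC := by
  letI := catMC
  exact
    { braiding := fun X Y =>
        show catProd X Y ≅ catProd Y X from
        { hom := catSwap X Y
          inv := catSwap Y X
          hom_inv_id := hom_ext fun v => rfl
          inv_hom_id := hom_ext fun v => rfl }
      braiding_naturality_right := fun X {_ _} f => hom_ext fun v => rfl
      braiding_naturality_left := fun {_ _} f Z => hom_ext fun v => rfl
      hexagon_forward := fun X Y Z => hom_ext fun v => rfl
      hexagon_reverse := fun X Y Z => hom_ext fun v => rfl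
      symmetry := fun X Y => hom_ext fun v => rfl }

/-- Internal hom for the categorical product. -/
def catIhomObj (X Z : GraphCat) : GraphCat where
  V := X ⟶ Z
  adj g h := g ≠ h ∧ ∀ v w, (v = w ∨ X.adj v w) →
      (g.toFun v = h.toFun w ∨ Z.adj (g.toFun v) (h.toFun w))
  symm := by
    rintro g h ⟨hne, hP⟩
    refine ⟨fun e => hne e.symm, fun v w hvw => ?_⟩
    have : w = v ∨ X.adj w v := by
      rcases hvw with e | a
      · exact Or.inl e.symm
      · exact Or.inr (X.symm a)
    rcases hP w v this with e | a
    · exact Or.inl e.symm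
    · exact Or.inr (Z.symm a)
  loopless := fun g h => h.1 rfl

lemma adj_ne {X : GraphCat} {v w : X.V} (h : X.adj v w) : v ≠ w :=
  fun e => X.loopless w (e ▸ h)

def catCurry0 {X Y Z : GraphCat} (f : catProd X Y ⟶ Z) (y : Y.V) : X ⟶ Z :=
  ⟨fun x => f.toFun (x, y), fun {v w} hx =>
    f.map_adj ⟨fun e => adj_ne hx (congrArg Prod.fst e), Or.inr hx, Or.inl rfl⟩⟩

def catCurry {X Y Z : GraphCat} (f : catProd X Y ⟶ Z) : Y ⟶ catIhomObj X Z :=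
  ⟨fun y => catCurry0 f y, by
    intro y y' hy
    by_cases e : catCurry0 f y = catCurry0 f y'
    · exact Or.inl e
    · refine Or.inr ⟨e, fun v w hvw => ?_⟩
      exact f.map_adj ⟨fun e' => adj_ne hy (congrArg Prod.snd e'), hvw, Or.inr hy⟩⟩

def catUncurry {X Y Z : GraphCat} (g : Y ⟶ catIhomObj X Z) : catProd X Y ⟶ Z :=
  ⟨fun p => (g.toFun p.2).toFun p.1, by
    rintro ⟨x,y⟩ ⟨x',y'⟩ ⟨hne, h1, h2⟩
    rcases h2 with rfl | hy
    · rcases h1 with rfl | hx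
      · exact absurd rfl hne
      · exact (g.toFun y).map_adj hx
    · rcases g.map_adj hy with e | ⟨_, hP⟩
      · simp only
        rw [show g.toFun y = g.toFun y' from e]
        rcases h1 with rfl | hx
        · exact Or.inl rfl
        · exact (g.toFun y').map_adj hx
      · exact hP x x' h1⟩

def catIhomMap (X : GraphCat) {Z Z' : GraphCat} (u : Z ⟶ Z') :
    catIhomObj X Z ⟶ catIhomObj X Z' :=
  ⟨fun g => g ≫ u, by
    rintro g h ⟨hne, hP⟩
    by_cases e : g ≫ u = h ≫ u
    · exact Or.inl e
    · refine Or.inr ⟨e, fun v w hvw => ?_⟩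
      rcases hP v w hvw with e' | a
      · exact Or.inl (congrArg u.toFun e')
      · exact u.map_adj a⟩

def catClosed : @MonoidalClosed GraphCat _ catMC := by
  letI := catMC
  refine ⟨fun X => ?_⟩
  exact
    { rightAdj :=
        { obj := fun Z => catIhomObj X Z
          map := fun {Z Z'} u => catIhomMap X u
          map_id := fun Z => hom_ext fun g => by apply Hom.ext'; rfl
          map_comp := fun u u' => hom_ext fun g => by apply Hom.ext'; rfl }
      adj := Adjunction.mkOfHomEquiv
        { homEquiv := fun Y Z =>
            { toFun := fun f => catCurry (show catProd X Y ⟶ Z from f)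
              invFun := fun g => catUncurry g
              left_inv := fun f => hom_ext fun p => rfl
              right_inv := fun g => hom_ext fun y => Hom.ext' rfl }
          homEquiv_naturality_left_symm := fun f g => hom_ext fun p => rfl
          homEquiv_naturality_right := fun f u => hom_ext fun y => Hom.ext' rfl } }

end GraphCat
namespace GraphCat

def boxTensorIso : @MonoidalCategory.tensor GraphCat _ boxMC ≅ boxFunctor := by
  letI := boxMC
  exact NatIso.ofComponents (fun p => Iso.refl _) (fun f => hom_ext fun v => rfl)

def catTensorIso : @MonoidalCategory.tensor GraphCat _ catMC ≅ catFunctor := by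
  letI := catMC
  exact NatIso.ofComponents (fun p => Iso.refl _) (fun f => hom_ext fun v => rfl)

theorem not_box_iso_cat : ¬ Nonempty (boxFunctor ≅ catFunctor) := by
  rintro ⟨e⟩
  have i := e.app (I1, I1)
  have hfg : ∀ u, i.inv.toFun (i.hom.toFun u) = u := fun u =>
    congrArg (fun h => Hom.toFun h u) i.hom_inv_id
  have hne : ((false,false) : (boxProd I1 I1).V) ≠ ((true,true) : (boxProd I1 I1).V) := by
    intro h; exact Bool.noConfusion (congrArg Prod.fst h)
  have h1 : (catProd I1 I1).adj (i.hom.toFun (false,false)) (i.hom.toFun (true,true)) := by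
    refine ⟨?_, eq_or_ne _ _, eq_or_ne _ _⟩
    intro e'
    exact hne (by rw [← hfg (false,false), ← hfg (true,true), e'])
  have key : (boxProd I1 I1).adj (false,false) (true,true) := by
    rcases i.inv.map_adj h1 with e' | a
    · exact absurd (by rw [← hfg (false,false), ← hfg (true,true)]; exact e') hne
    · exact (congrArg₂ (boxProd I1 I1).adj (hfg (false,false)) (hfg (true,true))).mp a
  rcases key with ⟨_, h⟩ | ⟨h, _⟩ <;> exact Bool.noConfusion h

end GraphCat
namespace GraphCat

/-! ### Generalities about the category of graphs -/

/-- The vertex `v` as a morphism `I0 ⟶ X`. -/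
def vHom {X : GraphCat} (v : X.V) : I0 ⟶ X := ⟨fun _ => v, fun h => h.elim⟩

@[simp] lemma vHom_toFun {X : GraphCat} (v : X.V) (u : I0.V) : (vHom v).toFun u = v := rfl

lemma vHom_comp {X Y : GraphCat} (v : X.V) (f : X ⟶ Y) :
    vHom v ≫ f = vHom (f.toFun v) := hom_ext fun _ => rfl

def pt0 : I0.V := PUnit.unit

/-- The unique morphism to the one-vertex graph. -/
def toI0 (X : GraphCat) : X ⟶ I0 := ⟨fun _ => ⟨⟩, fun _ => Or.inl rfl⟩

instance (X : GraphCat) : Subsingleton (X ⟶ I0) :=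
  ⟨fun f g => hom_ext fun v => rfl⟩

lemma hom_ext_of_subsingleton {X A : GraphCat} (h : ∀ a b : A.V, a = b)
    (f g : X ⟶ A) : f = g := hom_ext fun v => h _ _

/-- The complete graph on the type of propositions; maps into it are arbitrary functions. -/
def KProp : GraphCat := ⟨Prop, fun p q => p ≠ q, Ne.symm, fun _ h => h rfl⟩

lemma vertex_surjective_of_epi {A B : GraphCat} (f : A ⟶ B) [Epi f] :
    Function.Surjective f.toFun := by
  intro b
  let m1 : B ⟶ KProp := ⟨fun _ => True, fun _ => Or.inl rfl⟩
  let m2 : B ⟶ KProp := ⟨fun b => ∃ a, f.toFun a = b, fun _ => eq_or_ne _ _⟩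
  have h : f ≫ m1 = f ≫ m2 := hom_ext fun a => (eq_true ⟨a, rfl⟩).symm
  have h2 : m1 = m2 := (cancel_epi f).1 h
  have : (True : Prop) = ∃ a, f.toFun a = b := congrArg (fun (m : B ⟶ KProp) => m.toFun b) h2
  exact this ▸ trivial

lemma iso_toFun_bijective {A B : GraphCat} (e : A ≅ B) : Function.Bijective e.hom.toFun := by
  constructor
  · intro a a' h
    have h1 := congrArg (fun (m : A ⟶ A) => m.toFun a) e.hom_inv_id
    have h2 := congrArg (fun (m : A ⟶ A) => m.toFun a') e.hom_inv_id
    simp only [comp_toFun, id_toFun] at h1 h2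
    rw [← h1, ← h2, h]
  · intro b
    refine ⟨e.inv.toFun b, ?_⟩
    exact congrArg (fun (m : B ⟶ B) => m.toFun b) e.inv_hom_id

lemma iso_adj_iff {A B : GraphCat} (e : A ≅ B) (v w : A.V) :
    A.adj v w ↔ B.adj (e.hom.toFun v) (e.hom.toFun w) := by
  constructor
  · intro h
    rcases e.hom.map_adj h with h' | h'
    · exact absurd ((iso_toFun_bijective e).1 h') (adj_ne h)
    · exact h'
  · intro h
    have hinv : ∀ a, e.inv.toFun (e.hom.toFun a) = a := fun a =>
      congrArg (fun (m : A ⟶ A) => m.toFun a) e.hom_inv_id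
    rcases e.inv.map_adj h with h' | h'
    · rw [hinv, hinv] at h'
      rw [h'] at h
      exact absurd h (B.loopless _)
    · rwa [hinv, hinv] at h'

/-! ### Colimits of graphs -/

open Limits

lemma jointly_surjective {J : Type} [Category J] {D : J ⥤ GraphCat} {c : Cocone D}
    (h : IsColimit c) (a : c.pt.V) : ∃ j x, (c.ι.app j).toFun x = a := by
  let d : Cocone D :=
    { pt := KProp
      ι := { app := fun j => ⟨fun _ => True, fun _ => Or.inl rfl⟩
             naturality := fun j j' f => hom_ext fun v => rfl } }
  let m1 : c.pt ⟶ KProp := ⟨fun _ => True, fun _ => Or.inl rfl⟩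
  let m2 : c.pt ⟶ KProp := ⟨fun a => ∃ j x, (c.ι.app j).toFun x = a, fun _ => eq_or_ne _ _⟩
  have h1 : m1 = h.desc d := h.uniq d m1 (fun j => hom_ext fun v => rfl)
  have h2 : m2 = h.desc d := h.uniq d m2 (fun j => hom_ext fun v => eq_true ⟨j, v, rfl⟩)
  have : (True : Prop) = ∃ j x, (c.ι.app j).toFun x = a :=
    congrArg (fun (m : c.pt ⟶ KProp) => m.toFun a) (h1.trans h2.symm)
  exact this ▸ trivial

lemma edge_from_piece {J : Type} [Category J] {D : J ⥤ GraphCat} {c : Cocone D}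
    (h : IsColimit c) {a b : c.pt.V} (hab : c.pt.adj a b) :
    ∃ j x y, (D.obj j).adj x y ∧ (c.ι.app j).toFun x = a ∧ (c.ι.app j).toFun y = b := by
  let A' : GraphCat :=
    { V := c.pt.V
      adj := fun a b => a ≠ b ∧ ∃ j x y, (D.obj j).adj x y ∧
        (c.ι.app j).toFun x = a ∧ (c.ι.app j).toFun y = b
      symm := by
        rintro a b ⟨hne, j, x, y, hxy, hx, hy⟩
        exact ⟨hne.symm, j, y, x, (D.obj j).symm hxy, hy, hx⟩
      loopless := fun a ha => ha.1 rfl }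
  let c' : Cocone D :=
    { pt := A'
      ι := { app := fun j => ⟨(c.ι.app j).toFun, by
              intro x y hxy
              by_cases e : (c.ι.app j).toFun x = (c.ι.app j).toFun y
              · exact Or.inl e
              · exact Or.inr ⟨e, j, x, y, hxy, rfl, rfl⟩⟩
             naturality := fun j j' f => hom_ext fun v =>
               congrArg (fun (m : D.obj j ⟶ c.pt) => m.toFun v) (c.ι.naturality f) } }
  let k : c.pt ⟶ A' := h.desc c'
  have kfix : ∀ j x, k.toFun ((c.ι.app j).toFun x) = (c.ι.app j).toFun x := fun j x =>
    congrArg (fun (m : D.obj j ⟶ A') => m.toFun x) (h.fac c' j)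
  have ktot : ∀ a, k.toFun a = a := by
    intro a
    obtain ⟨j, x, rfl⟩ := jointly_surjective h a
    exact kfix j x
  rcases k.map_adj hab with e | hadj
  · rw [ktot, ktot] at e
    exact absurd e (adj_ne hab)
  · rw [ktot, ktot] at hadj
    exact hadj.2

end GraphCat
namespace GraphCat

open Limits

/-! ### The canonical presentation of a graph as a colimit of vertices and edges -/

def EdgeT (Y : GraphCat) : Type := {p : Y.V × Y.V // Y.adj p.1 p.2}

/-- The morphism `I1 ⟶ Y` corresponding to an edge. -/
def edgeHom {Y : GraphCat} (e : EdgeT Y) : I1 ⟶ Y :=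
  ⟨fun b => cond b e.val.2 e.val.1, by
    intro v w hvw
    cases v <;> cases w
    · exact absurd rfl hvw
    · exact Or.inr e.property
    · exact Or.inr (Y.symm e.property)
    · exact absurd rfl hvw⟩

@[simp] lemma edgeHom_false {Y : GraphCat} (e : EdgeT Y) :
    (edgeHom e).toFun false = e.val.1 := rfl

@[simp] lemma edgeHom_true {Y : GraphCat} (e : EdgeT Y) :
    (edgeHom e).toFun true = e.val.2 := rfl

inductive ElObj (Y : GraphCat) : Type
  | vert (v : Y.V)
  | edge (e : EdgeT Y)

def ElHom {Y : GraphCat} : ElObj Y → ElObj Y → Type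
  | .vert v, .vert w => PLift (v = w)
  | .edge e, .edge f => PLift (e = f)
  | .vert v, .edge e => PLift (v = e.val.1) ⊕ PLift (v = e.val.2)
  | .edge _, .vert _ => PEmpty

instance elHomSubsingleton {Y : GraphCat} (a b : ElObj Y) : Subsingleton (ElHom a b) := by
  cases a <;> cases b
  · exact ⟨fun ⟨h1⟩ ⟨h2⟩ => rfl⟩
  case vert.edge v e =>
    refine ⟨fun f g => ?_⟩
    rcases f with ⟨hf⟩ | ⟨hf⟩ <;> rcases g with ⟨hg⟩ | ⟨hg⟩
    · exact congrArg Sum.inl (Subsingleton.elim _ _)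
    · exact absurd (hf.down.symm.trans hg.down) (adj_ne e.property)
    · exact absurd (hg.down.symm.trans hf.down) (adj_ne e.property)
    · exact congrArg Sum.inr (Subsingleton.elim _ _)
  · exact ⟨fun f _ => f.elim⟩
  · exact ⟨fun ⟨h1⟩ ⟨h2⟩ => rfl⟩

instance elCategory (Y : GraphCat) : Category (ElObj Y) where
  Hom := ElHom
  id o := match o with
    | .vert v => PLift.up rfl
    | .edge e => PLift.up rfl
  comp {a b c} f g := match a, b, c, f, g with
    | .vert _, .vert _, .vert _, ⟨h1⟩, ⟨h2⟩ => PLift.up (h1.trans h2)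
    | .vert _, .vert _, .edge _, ⟨h⟩, g => h ▸ g
    | .vert _, .edge _, .edge _, f, ⟨h⟩ => h ▸ f
    | .edge _, .edge _, .edge _, ⟨h1⟩, ⟨h2⟩ => PLift.up (h1.trans h2)
    | .edge _, .edge _, .vert _, _, g => g.elim
    | .edge _, .vert _, _, f, _ => f.elim
  id_comp := fun f => @Subsingleton.elim _ (elHomSubsingleton _ _) _ _
  comp_id := fun f => @Subsingleton.elim _ (elHomSubsingleton _ _) _ _
  assoc := fun f g h => @Subsingleton.elim _ (elHomSubsingleton _ _) _ _

/-- The canonical vertices-and-edges diagram of a graph. -/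
def elDiagram (Y : GraphCat) : ElObj Y ⥤ GraphCat where
  obj o := match o with
    | .vert _ => I0
    | .edge _ => I1
  map {a b} f := match a, b, f with
    | .vert _, .vert _, _ => 𝟙 I0
    | .vert _, .edge _, Sum.inl _ => vHom false
    | .vert _, .edge _, Sum.inr _ => vHom true
    | .edge _, .edge _, _ => 𝟙 I1
    | .edge _, .vert _, f => f.elim
  map_id := fun o => by cases o <;> rfl
  map_comp := fun {a b c} f g => by
    cases a <;> cases b <;> cases c
    case vert.vert.vert => obtain ⟨rfl⟩ := f; obtain ⟨rfl⟩ := g; exact (hom_ext fun v => rfl)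
    case vert.vert.edge =>
      obtain ⟨rfl⟩ := f
      rcases g with ⟨⟨rfl⟩⟩ | ⟨⟨rfl⟩⟩ <;> exact (hom_ext fun v => rfl)
    case vert.edge.vert => exact g.elim
    case vert.edge.edge =>
      rcases f with ⟨⟨rfl⟩⟩ | ⟨⟨rfl⟩⟩ <;> obtain ⟨rfl⟩ := g <;> exact (hom_ext fun v => rfl)
    case edge.vert.vert => exact f.elim
    case edge.vert.edge => exact f.elim
    case edge.edge.vert => exact g.elim
    case edge.edge.edge => obtain ⟨rfl⟩ := f; obtain ⟨rfl⟩ := g; exact (hom_ext fun v => rfl)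

def elCocone (Y : GraphCat) : Cocone (elDiagram Y) where
  pt := Y
  ι :=
    { app := fun o => match o with
        | .vert v => vHom v
        | .edge e => edgeHom e
      naturality := fun a b f => by
        cases a <;> cases b
        case vert.vert => obtain ⟨rfl⟩ := f; exact hom_ext fun v => rfl
        case vert.edge => rcases f with ⟨⟨rfl⟩⟩ | ⟨⟨rfl⟩⟩ <;> exact hom_ext fun v => rfl
        case edge.vert => exact f.elim
        case edge.edge => obtain ⟨rfl⟩ := f; exact hom_ext fun v => rfl }

def elIsColimit (Y : GraphCat) : IsColimit (elCocone Y) where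
  desc s :=
    ⟨fun v => (s.ι.app (.vert v)).toFun ⟨⟩, by
      intro a b hab
      let e : EdgeT Y := ⟨(a, b), hab⟩
      have ha : (s.ι.app (.vert a)).toFun ⟨⟩ = (s.ι.app (.edge e)).toFun false := by
        have h1 := s.ι.naturality
          (show ElObj.vert a ⟶ ElObj.edge e from Sum.inl (PLift.up rfl))
        have h2 := congrArg (fun (m : I0 ⟶ s.pt) => m.toFun ⟨⟩) h1
        exact h2.symm
      have hb : (s.ι.app (.vert b)).toFun ⟨⟩ = (s.ι.app (.edge e)).toFun true := by
        have h1 := s.ι.naturality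
          (show ElObj.vert b ⟶ ElObj.edge e from Sum.inr (PLift.up rfl))
        have h2 := congrArg (fun (m : I0 ⟶ s.pt) => m.toFun ⟨⟩) h1
        exact h2.symm
      show (s.ι.app (.vert a)).toFun ⟨⟩ = (s.ι.app (.vert b)).toFun ⟨⟩ ∨
        s.pt.adj ((s.ι.app (.vert a)).toFun ⟨⟩) ((s.ι.app (.vert b)).toFun ⟨⟩)
      rw [ha, hb]
      exact (s.ι.app (.edge e)).map_adj (Bool.false_ne_true)⟩
  fac s o := by
    cases o with
    | vert v => exact hom_ext fun u => rfl
    | edge e =>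
      apply hom_ext
      intro b
      have hfalse : (s.ι.app (.vert e.val.1)).toFun ⟨⟩ = (s.ι.app (.edge e)).toFun false := by
        have h1 := s.ι.naturality
          (show ElObj.vert e.val.1 ⟶ ElObj.edge e from Sum.inl (PLift.up rfl))
        have h2 := congrArg (fun (m : I0 ⟶ s.pt) => m.toFun ⟨⟩) h1
        exact h2.symm
      have htrue : (s.ι.app (.vert e.val.2)).toFun ⟨⟩ = (s.ι.app (.edge e)).toFun true := by
        have h1 := s.ι.naturality
          (show ElObj.vert e.val.2 ⟶ ElObj.edge e from Sum.inr (PLift.up rfl))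
        have h2 := congrArg (fun (m : I0 ⟶ s.pt) => m.toFun ⟨⟩) h1
        exact h2.symm
      cases b
      · exact hfalse
      · exact htrue
  uniq s m hm := by
    apply hom_ext
    intro v
    have := congrArg (fun (k : I0 ⟶ s.pt) => k.toFun ⟨⟩) (hm (.vert v))
    exact this

/-! ### Discrete graphs as coproducts of points -/

def Dgraph (S : Type) : GraphCat := ⟨S, fun _ _ => False, fun h => h, fun _ h => h⟩

def dCofan (S : Type) : Cocone (Discrete.functor (fun _ : S => I0)) where
  pt := Dgraph S
  ι := Discrete.natTrans fun s => vHom s.as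

def dIsColimit (S : Type) : IsColimit (dCofan S) where
  desc s := ⟨fun v => (s.ι.app ⟨v⟩).toFun ⟨⟩, fun h => h.elim⟩
  fac s j := by
    cases j with
    | mk s' => exact hom_ext fun u => rfl
  uniq s m hm := by
    apply hom_ext
    intro v
    have := congrArg (fun (k : I0 ⟶ s.pt) => k.toFun ⟨⟩) (hm ⟨v⟩)
    exact this

/-- The identity-on-vertices epimorphism from the discrete graph. -/
def dEpi (Y : GraphCat) : Dgraph Y.V ⟶ Y := ⟨id, fun h => h.elim⟩

instance (Y : GraphCat) : Epi (dEpi Y) :=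
  ⟨fun u v h => hom_ext fun y => congrArg (fun (m : Dgraph Y.V ⟶ _) => m.toFun y) h⟩

end GraphCat
namespace GraphCat

open Limits

section Monoidal

variable [MonoidalCategory GraphCat] [SymmetricCategory GraphCat] [MonoidalClosed GraphCat]
set_option linter.unusedSectionVars false

lemma tensorLeft_epi (X : GraphCat) {A B : GraphCat} (f : A ⟶ B) [Epi f] :
    Epi ((tensorLeft X).map f) := by
  constructor
  intro Z u v huv
  have adj := ihom.adjunction X
  have h1 : f ≫ (adj.homEquiv _ _) u = f ≫ (adj.homEquiv _ _) v := by
    rw [← Adjunction.homEquiv_naturality_left, ← Adjunction.homEquiv_naturality_left, huv]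
  exact (adj.homEquiv _ _).injective ((cancel_epi f).1 h1)

lemma unit_nonempty : Nonempty (𝟙_ GraphCat).V := by
  by_contra h
  rw [not_nonempty_iff] at h
  let D : Discrete PEmpty ⥤ GraphCat := Discrete.functor (fun a => a.elim)
  let c : Cocone D :=
    { pt := 𝟙_ GraphCat
      ι := Discrete.natTrans fun j => j.as.elim }
  have hc : IsColimit c :=
    { desc := fun s => ⟨fun v => (h.false v).elim, fun {v w} _ => (h.false v).elim⟩
      fac := fun s j => j.as.elim
      uniq := fun s m hm => hom_ext fun v => (h.false v).elim }
  letI : PreservesColimitsOfSize.{0,0} (tensorLeft I0) :=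
    (ihom.adjunction I0).leftAdjoint_preservesColimits
  have hc2 := isColimitOfPreserves (tensorLeft I0) hc
  obtain ⟨j, _, _⟩ := jointly_surjective hc2 ((ρ_ I0).inv.toFun ⟨⟩)
  exact j.as.elim

/-- A choice of vertex of the unit object. -/
noncomputable def iU : I0 ⟶ 𝟙_ GraphCat := vHom (Classical.choice unit_nonempty)

noncomputable def qU : 𝟙_ GraphCat ⟶ I0 := toI0 _

noncomputable def tUnit : 𝟙_ GraphCat ⟶ 𝟙_ GraphCat := qU ≫ iU

noncomputable def eApp (X : GraphCat) : X ⟶ X := (λ_ X).inv ≫ (tUnit ▷ X) ≫ (λ_ X).hom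

lemma eApp_natural {X Y : GraphCat} (f : X ⟶ Y) : f ≫ eApp Y = eApp X ≫ f := by
  unfold eApp
  rw [← Category.assoc, ← Category.assoc, MonoidalCategory.leftUnitor_inv_naturality]
  have h2 : (𝟙_ GraphCat ◁ f) ≫ (tUnit ▷ Y) = (tUnit ▷ X) ≫ (𝟙_ GraphCat ◁ f) := by
    rw [MonoidalCategory.whisker_exchange]
  slice_lhs 2 3 => rw [h2]
  simp only [Category.assoc]
  rw [MonoidalCategory.leftUnitor_naturality]

lemma eApp_eq_id (X : GraphCat) : eApp X = 𝟙 X := by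
  apply hom_ext
  intro v
  have h0 : eApp I0 = 𝟙 I0 := Subsingleton.elim _ _
  have h1 := eApp_natural (vHom v : I0 ⟶ X)
  rw [h0] at h1
  have h2 := congrArg (fun (m : I0 ⟶ X) => m.toFun ⟨⟩) h1
  exact h2

/-- The natural isomorphism `I0 ⊗ X ≅ X`. -/
noncomputable def lam0 (X : GraphCat) : ((I0 ⊗ X : GraphCat)) ≅ X where
  hom := (iU ▷ X) ≫ (λ_ X).hom
  inv := (λ_ X).inv ≫ (qU ▷ X)
  hom_inv_id := by
    have : iU ≫ qU = 𝟙 I0 := Subsingleton.elim _ _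
    rw [Category.assoc, ← Category.assoc (λ_ X).hom, Iso.hom_inv_id, Category.id_comp,
      ← MonoidalCategory.comp_whiskerRight, this, MonoidalCategory.id_whiskerRight]
  inv_hom_id := by
    have : (qU ▷ X) ≫ (iU ▷ X) = tUnit ▷ X := by
      rw [← MonoidalCategory.comp_whiskerRight]; rfl
    rw [Category.assoc, ← Category.assoc (qU ▷ X), this, ← eApp, eApp_eq_id]

lemma lam0_natural {X Y : GraphCat} (f : X ⟶ Y) :
    (I0 ◁ f) ≫ (lam0 Y).hom = (lam0 X).hom ≫ f := by
  show (I0 ◁ f) ≫ (iU ▷ Y) ≫ (λ_ Y).hom = ((iU ▷ X) ≫ (λ_ X).hom) ≫ f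
  rw [← Category.assoc, MonoidalCategory.whisker_exchange, Category.assoc,
    MonoidalCategory.leftUnitor_naturality, ← Category.assoc]

/-- The natural isomorphism `X ⊗ I0 ≅ X`. -/
noncomputable def rho0 (X : GraphCat) : ((X ⊗ I0 : GraphCat)) ≅ X :=
  (β_ X I0) ≪≫ lam0 X

lemma rho0_natural {X Y : GraphCat} (f : X ⟶ Y) :
    (f ▷ I0) ≫ (rho0 Y).hom = (rho0 X).hom ≫ f := by
  show (f ▷ I0) ≫ (β_ Y I0).hom ≫ (lam0 Y).hom = ((β_ X I0).hom ≫ (lam0 X).hom) ≫ f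
  rw [← Category.assoc, BraidedCategory.braiding_naturality_left, Category.assoc,
    lam0_natural, ← Category.assoc]

lemma vertex_I0I0_subsingleton : ∀ a b : ((I0 ⊗ I0 : GraphCat)).V, a = b := by
  intro a b
  apply (iso_toFun_bijective (lam0 I0)).1
  rfl

noncomputable def deltaHom : (I0 : GraphCat) ⟶ (I0 ⊗ I0 : GraphCat) := (lam0 I0).inv

/-- The canonical vertex pairing `V X × V Y → V (X ⊗ Y)`. -/
noncomputable def pvHom {X Y : GraphCat} (v : X.V) (w : Y.V) : I0 ⟶ (X ⊗ Y : GraphCat) :=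
  deltaHom ≫ (vHom v ⊗ₘ vHom w)

noncomputable def pv {X Y : GraphCat} (v : X.V) (w : Y.V) : ((X ⊗ Y : GraphCat)).V :=
  (pvHom v w).toFun ⟨⟩

lemma pvHom_comp {X Y X' Y' : GraphCat} (v : X.V) (w : Y.V) (f : X ⟶ X') (g : Y ⟶ Y') :
    pvHom v w ≫ (f ⊗ₘ g) = pvHom (f.toFun v) (g.toFun w) := by
  unfold pvHom
  rw [Category.assoc, MonoidalCategory.tensorHom_comp_tensorHom, vHom_comp, vHom_comp]

lemma pv_tensorHom {X Y X' Y' : GraphCat} (v : X.V) (w : Y.V) (f : X ⟶ X') (g : Y ⟶ Y') :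
    (f ⊗ₘ g).toFun (pv v w) = pv (f.toFun v) (g.toFun w) :=
  congrArg (fun (m : I0 ⟶ (X' ⊗ Y' : GraphCat)) => m.toFun ⟨⟩) (pvHom_comp v w f g)

lemma lam0_pv {X : GraphCat} (u : I0.V) (v : X.V) :
    (lam0 X).hom.toFun (pv u v) = v := by
  have h1 : pvHom u v ≫ (lam0 X).hom = vHom v := by
    unfold pvHom
    have hu : (vHom u : I0 ⟶ I0) = 𝟙 I0 := Subsingleton.elim _ _
    rw [hu, MonoidalCategory.id_tensorHom, Category.assoc, lam0_natural, ← Category.assoc]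
    show deltaHom ≫ (lam0 I0).hom ≫ vHom v = vHom v
    rw [← Category.assoc]
    unfold deltaHom
    rw [Iso.inv_hom_id, Category.id_comp]
  exact congrArg (fun (m : I0 ⟶ X) => m.toFun ⟨⟩) h1

lemma braid_pv {X Y : GraphCat} (v : X.V) (w : Y.V) :
    (β_ X Y).hom.toFun (pv v w) = pv w v := by
  have h1 : pvHom v w ≫ (β_ X Y).hom = pvHom w v := by
    unfold pvHom
    rw [Category.assoc, BraidedCategory.braiding_naturality, ← Category.assoc]
    congr 1
    exact hom_ext_of_subsingleton vertex_I0I0_subsingleton _ _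
  exact congrArg (fun (m : I0 ⟶ (Y ⊗ X : GraphCat)) => m.toFun ⟨⟩) h1

lemma rho0_pv {X : GraphCat} (v : X.V) (u : I0.V) :
    (rho0 X).hom.toFun (pv v u) = v := by
  show (lam0 X).hom.toFun ((β_ X I0).hom.toFun (pv v u)) = v
  rw [braid_pv, lam0_pv]

lemma pv_whiskerLeft {X Y Y' : GraphCat} (v : X.V) (w : Y.V) (g : Y ⟶ Y') :
    (X ◁ g).toFun (pv v w) = pv v (g.toFun w) := by
  rw [← MonoidalCategory.id_tensorHom]
  exact (pv_tensorHom v w (𝟙 X) g).trans rfl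

lemma pv_whiskerRight {X X' Y : GraphCat} (v : X.V) (w : Y.V) (f : X ⟶ X') :
    (f ▷ Y).toFun (pv v w) = pv (f.toFun v) w := by
  rw [← MonoidalCategory.tensorHom_id]
  exact (pv_tensorHom v w f (𝟙 Y)).trans rfl

lemma pv_inj {X Y : GraphCat} {v v' : X.V} {w w' : Y.V}
    (h : (pv v w : ((X ⊗ Y : GraphCat)).V) = pv v' w') : v = v' ∧ w = w' := by
  constructor
  · have h1 := congrArg (X ◁ toI0 Y).toFun h
    rw [pv_whiskerLeft, pv_whiskerLeft] at h1
    have h2 := congrArg (rho0 X).hom.toFun h1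
    rwa [rho0_pv, rho0_pv] at h2
  · have h1 := congrArg (toI0 X ▷ Y).toFun h
    rw [pv_whiskerRight, pv_whiskerRight] at h1
    have h2 := congrArg (lam0 Y).hom.toFun h1
    rwa [lam0_pv, lam0_pv] at h2

lemma vertex_tensor_I0 {X : GraphCat} (x : ((X ⊗ I0 : GraphCat)).V) :
    x = pv ((rho0 X).hom.toFun x) pt0 := by
  apply (iso_toFun_bijective (rho0 X)).1
  rw [rho0_pv]

lemma pv_surj {X Y : GraphCat} (u : ((X ⊗ Y : GraphCat)).V) :
    ∃ v w, (pv v w : ((X ⊗ Y : GraphCat)).V) = u := by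
  letI : PreservesColimitsOfSize.{0,0} (tensorLeft X) :=
    (ihom.adjunction X).leftAdjoint_preservesColimits
  haveI := tensorLeft_epi X (dEpi Y)
  obtain ⟨u', hu'⟩ := vertex_surjective_of_epi ((tensorLeft X).map (dEpi Y)) u
  have hc := isColimitOfPreserves (tensorLeft X) (dIsColimit Y.V)
  obtain ⟨j, x, hx⟩ := jointly_surjective hc u'
  set v := (rho0 X).hom.toFun x with hv
  have hxv : x = pv v pt0 := vertex_tensor_I0 x
  refine ⟨v, j.as, ?_⟩
  have comp1 : ((tensorLeft X).map (vHom j.as : I0 ⟶ Dgraph Y.V)) ≫ ((tensorLeft X).map (dEpi Y))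
      = (X ◁ (vHom j.as : I0 ⟶ Y)) := by
    rw [← Functor.map_comp]
    refine (congrArg (fun m => (tensorLeft X).map m) (vHom_comp (X := Dgraph Y.V) j.as (dEpi Y))).trans ?_
    rfl
  have h3 : u = (X ◁ (vHom j.as : I0 ⟶ Y)).toFun (pv v pt0) := by
    rw [← comp1]
    have hx' : ((tensorLeft X).map (vHom j.as : I0 ⟶ Dgraph Y.V)).toFun x = u' := hx
    show u = ((tensorLeft X).map (dEpi Y)).toFun
      (((tensorLeft X).map (vHom j.as : I0 ⟶ Dgraph Y.V)).toFun (pv v pt0))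
    rw [← hxv, hx', hu']
  rw [h3, pv_whiskerLeft]
  rfl

end Monoidal

end GraphCat
open CategoryTheory.Limits

namespace GraphCat

section Monoidal

variable [MonoidalCategory GraphCat] [SymmetricCategory GraphCat] [MonoidalClosed GraphCat]
set_option linter.unusedSectionVars false

lemma pv_ne {X Y : GraphCat} {v v' : X.V} {w w' : Y.V}
    (h : ¬ (v = v' ∧ w = w')) : (pv v w : ((X ⊗ Y : GraphCat)).V) ≠ pv v' w' :=
  fun e => h (pv_inj e)

lemma adj_pv_fst {X Y : GraphCat} {v v' : X.V} (h : X.adj v v') (w : Y.V) :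
    ((X ⊗ Y : GraphCat)).adj (pv v w) (pv v' w) := by
  have hbase : ((I1 ⊗ I0 : GraphCat)).adj (pv false pt0) (pv true pt0) := by
    erw [iso_adj_iff (rho0 I1), rho0_pv, rho0_pv]
    exact Bool.false_ne_true
  let e : EdgeT X := ⟨(v, v'), h⟩
  have hmap := (edgeHom e ⊗ₘ vHom w).map_adj hbase
  erw [pv_tensorHom, pv_tensorHom] at hmap
  rcases hmap with heq | hadj
  · exact absurd (pv_inj heq).1 (adj_ne h)
  · exact hadj

lemma adj_pv_snd {X Y : GraphCat} (v : X.V) {w w' : Y.V} (h : Y.adj w w') :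
    ((X ⊗ Y : GraphCat)).adj (pv v w) (pv v w') := by
  have h1 := adj_pv_fst h v
  have h2 := (iso_adj_iff (β_ Y X) _ _).1 h1
  rwa [braid_pv, braid_pv] at h2

lemma adj_pv_components {X Y : GraphCat} {v v' : X.V} {w w' : Y.V}
    (h : ((X ⊗ Y : GraphCat)).adj (pv v w) (pv v' w')) :
    (v = v' ∨ X.adj v v') ∧ (w = w' ∨ Y.adj w w') := by
  constructor
  · have hmap := ((X ◁ toI0 Y) ≫ (rho0 X).hom).map_adj h
    have e1 : ((X ◁ toI0 Y) ≫ (rho0 X).hom).toFun (pv v w) = v := by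
      show (rho0 X).hom.toFun ((X ◁ toI0 Y).toFun (pv v w)) = v
      rw [pv_whiskerLeft, rho0_pv]
    have e2 : ((X ◁ toI0 Y) ≫ (rho0 X).hom).toFun (pv v' w') = v' := by
      show (rho0 X).hom.toFun ((X ◁ toI0 Y).toFun (pv v' w')) = v'
      rw [pv_whiskerLeft, rho0_pv]
    rwa [e1, e2] at hmap
  · have hmap := ((toI0 X ▷ Y) ≫ (lam0 Y).hom).map_adj h
    have e1 : ((toI0 X ▷ Y) ≫ (lam0 Y).hom).toFun (pv v w) = w := by
      show (lam0 Y).hom.toFun ((toI0 X ▷ Y).toFun (pv v w)) = w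
      rw [pv_whiskerRight, lam0_pv]
    have e2 : ((toI0 X ▷ Y) ≫ (lam0 Y).hom).toFun (pv v' w') = w' := by
      show (lam0 Y).hom.toFun ((toI0 X ▷ Y).toFun (pv v' w')) = w'
      rw [pv_whiskerRight, lam0_pv]
    rwa [e1, e2] at hmap

/-- Whether the tensor `I1 ⊗ I1` contains the diagonal edge. -/
def diagProp : Prop := ((I1 ⊗ I1 : GraphCat)).adj (pv false false) (pv true true)

def sigmaIso : I1 ≅ I1 where
  hom := ⟨fun b => !b, fun {v w} h => Or.inr (fun e => h (Bool.not_inj e))⟩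
  inv := ⟨fun b => !b, fun {v w} h => Or.inr (fun e => h (Bool.not_inj e))⟩
  hom_inv_id := hom_ext fun v => by cases v <;> rfl
  inv_hom_id := hom_ext fun v => by cases v <;> rfl

lemma antidiag_iff :
    ((I1 ⊗ I1 : GraphCat)).adj (pv true false) (pv false true) ↔ diagProp := by
  have h := iso_adj_iff ((tensorRight I1).mapIso sigmaIso)
    (pv false false : ((I1 ⊗ I1 : GraphCat)).V) (pv true true)
  have e1 : ((tensorRight I1).mapIso sigmaIso).hom.toFun (pv false false) = pv true false := by
    show (sigmaIso.hom ▷ I1).toFun (pv false false) = pv true false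
    erw [pv_whiskerRight]; rfl
  have e2 : ((tensorRight I1).mapIso sigmaIso).hom.toFun (pv true true) = pv false true := by
    show (sigmaIso.hom ▷ I1).toFun (pv true true) = pv false true
    erw [pv_whiskerRight]; rfl
  rw [e1, e2] at h
  exact h.symm

lemma adj_pv_diag {X Y : GraphCat} (hd : diagProp) {v v' : X.V} {w w' : Y.V}
    (hv : X.adj v v') (hw : Y.adj w w') :
    ((X ⊗ Y : GraphCat)).adj (pv v w) (pv v' w') := by
  let eX : EdgeT X := ⟨(v, v'), hv⟩
  let eY : EdgeT Y := ⟨(w, w'), hw⟩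
  have hmap := (edgeHom eX ⊗ₘ edgeHom eY).map_adj hd
  erw [pv_tensorHom, pv_tensorHom] at hmap
  rcases hmap with heq | hadj
  · exact absurd (pv_inj heq).1 (adj_ne hv)
  · exact hadj

lemma diag_implies {X Y : GraphCat} {v v' : X.V} {w w' : Y.V}
    (h : ((X ⊗ Y : GraphCat)).adj (pv v w) (pv v' w'))
    (hv : X.adj v v') (hw : Y.adj w w') : diagProp := by
  letI : PreservesColimitsOfSize.{0,0} (tensorLeft X) :=
    (ihom.adjunction X).leftAdjoint_preservesColimits
  letI : PreservesColimitsOfSize.{0,0} (tensorLeft I1) :=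
    (ihom.adjunction I1).leftAdjoint_preservesColimits
  -- Stage 1: the edge comes from a piece of the presentation of Y
  have hc := isColimitOfPreserves (tensorLeft X) (elIsColimit Y)
  obtain ⟨j, x, y, hpiece, hx, hy⟩ := edge_from_piece hc h
  cases j with
  | vert u =>
    obtain ⟨a, i, hxeq⟩ := pv_surj (X := X) (Y := I0) x
    obtain ⟨a', i', hyeq⟩ := pv_surj (X := X) (Y := I0) y
    have hx' : (X ◁ (vHom u : I0 ⟶ Y)).toFun x = pv v w := hx
    have hy' : (X ◁ (vHom u : I0 ⟶ Y)).toFun y = pv v' w' := hy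
    rw [← hxeq, pv_whiskerLeft] at hx'
    rw [← hyeq, pv_whiskerLeft] at hy'
    have h1 := (pv_inj hx').2
    have h2 := (pv_inj hy').2
    exact absurd (h1.symm.trans h2) (adj_ne hw)
  | edge e =>
    obtain ⟨a, i, hxeq⟩ := pv_surj (X := X) (Y := I1) x
    obtain ⟨a', i', hyeq⟩ := pv_surj (X := X) (Y := I1) y
    have hx' : (X ◁ edgeHom e).toFun x = pv v w := hx
    have hy' : (X ◁ edgeHom e).toFun y = pv v' w' := hy
    rw [← hxeq, pv_whiskerLeft] at hx'
    rw [← hyeq, pv_whiskerLeft] at hy'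
    obtain ⟨hav, hiw⟩ := pv_inj hx'
    obtain ⟨hav', hiw'⟩ := pv_inj hy'
    have hii : i ≠ i' := by
      intro hii'
      apply adj_ne hw
      rw [← hiw, ← hiw', hii']
    have hXI1 : ((X ⊗ I1 : GraphCat)).adj (pv v i) (pv v' i') := by
      rw [← hav, ← hav'] at hv ⊢
      rw [hxeq, hyeq]
      exact hpiece
    -- Stage 2: braid to I1 ⊗ X
    have hI1X : ((I1 ⊗ X : GraphCat)).adj (pv i v) (pv i' v') := by
      have := (iso_adj_iff (β_ X I1) _ _).1 hXI1
      rwa [braid_pv, braid_pv] at this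
    -- Stage 3: the edge comes from a piece of the presentation of X
    have hc2 := isColimitOfPreserves (tensorLeft I1) (elIsColimit X)
    obtain ⟨j2, x2, y2, hpiece2, hx2, hy2⟩ := edge_from_piece hc2 hI1X
    cases j2 with
    | vert u =>
      obtain ⟨b, k, hx2eq⟩ := pv_surj (X := I1) (Y := I0) x2
      obtain ⟨b', k', hy2eq⟩ := pv_surj (X := I1) (Y := I0) y2
      have hx2' : (I1 ◁ (vHom u : I0 ⟶ X)).toFun x2 = pv i v := hx2
      have hy2' : (I1 ◁ (vHom u : I0 ⟶ X)).toFun y2 = pv i' v' := hy2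
      rw [← hx2eq, pv_whiskerLeft] at hx2'
      rw [← hy2eq, pv_whiskerLeft] at hy2'
      have h1 := (pv_inj hx2').2
      have h2 := (pv_inj hy2').2
      exact absurd (h1.symm.trans h2) (adj_ne hv)
    | edge e2 =>
      obtain ⟨b, c, hx2eq⟩ := pv_surj (X := I1) (Y := I1) x2
      obtain ⟨b', c', hy2eq⟩ := pv_surj (X := I1) (Y := I1) y2
      have hx2' : (I1 ◁ edgeHom e2).toFun x2 = pv i v := hx2
      have hy2' : (I1 ◁ edgeHom e2).toFun y2 = pv i' v' := hy2
      rw [← hx2eq, pv_whiskerLeft] at hx2'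
      rw [← hy2eq, pv_whiskerLeft] at hy2'
      obtain ⟨hbi, hcv⟩ := pv_inj hx2'
      obtain ⟨hbi', hcv'⟩ := pv_inj hy2'
      have hbb : b ≠ b' := fun hbb' => hii (by rw [← hbi, ← hbi', hbb'])
      have hcc : c ≠ c' := by
        intro hcc'
        apply adj_ne hv
        rw [← hcv, ← hcv', hcc']
      have hB : ((I1 ⊗ I1 : GraphCat)).adj (pv b c) (pv b' c') := by
        rw [hx2eq, hy2eq]; exact hpiece2
      -- conclude diagProp by case analysis on booleans
      have hbool : ∀ {a b : Bool}, a ≠ b → b = !a := by decide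
      rw [hbool hbb] at hB
      rw [hbool hcc] at hB
      cases b <;> cases c
      · exact hB
      · exact antidiag_iff.1 (((I1 ⊗ I1 : GraphCat)).symm hB)
      · exact antidiag_iff.1 hB
      · exact ((I1 ⊗ I1 : GraphCat)).symm hB

end Monoidal

end GraphCat
open CategoryTheory.Limits

namespace GraphCat

section Monoidal

variable [MonoidalCategory GraphCat] [SymmetricCategory GraphCat] [MonoidalClosed GraphCat]
set_option linter.unusedSectionVars false

noncomputable def pvEquiv (X Y : GraphCat) : X.V × Y.V ≃ ((X ⊗ Y : GraphCat)).V :=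
  Equiv.ofBijective (fun q => pv q.1 q.2)
    ⟨fun q q' h => Prod.ext (pv_inj h).1 (pv_inj h).2,
     fun u => by obtain ⟨v, w, h⟩ := pv_surj u; exact ⟨(v, w), h⟩⟩

lemma pvEquiv_symm_pv {X Y : GraphCat} (v : X.V) (w : Y.V) :
    (pvEquiv X Y).symm (pv v w) = (v, w) :=
  (Equiv.symm_apply_eq _).mpr rfl

/-- Component iso with the categorical product, assuming the diagonal edge. -/
noncomputable def catCompIso (hd : diagProp) (X Y : GraphCat) :
    ((X ⊗ Y : GraphCat)) ≅ catProd X Y where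
  hom := ⟨fun u => (pvEquiv X Y).symm u, by
    intro u u' h
    obtain ⟨v, w, rfl⟩ := pv_surj u
    obtain ⟨v', w', rfl⟩ := pv_surj u'
    right
    rw [pvEquiv_symm_pv, pvEquiv_symm_pv]
    obtain ⟨h1, h2⟩ := adj_pv_components h
    refine ⟨?_, h1, h2⟩
    intro e
    rw [Prod.mk.injEq] at e
    exact adj_ne h (by rw [e.1, e.2])⟩
  inv := ⟨fun q => pv q.1 q.2, by
    rintro ⟨v, w⟩ ⟨v', w'⟩ ⟨hne, h1, h2⟩
    right
    rcases h1 with rfl | hv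
    · rcases h2 with rfl | hw
      · exact absurd rfl hne
      · exact adj_pv_snd v hw
    · rcases h2 with rfl | hw
      · exact adj_pv_fst hv w
      · exact adj_pv_diag hd hv hw⟩
  hom_inv_id := hom_ext fun u => by
    obtain ⟨v, w, rfl⟩ := pv_surj u
    show pv ((pvEquiv X Y).symm (pv v w)).1 ((pvEquiv X Y).symm (pv v w)).2 = pv v w
    rw [pvEquiv_symm_pv]
  inv_hom_id := hom_ext fun q => by
    have : (pvEquiv X Y).symm (pv q.1 q.2) = (q.1, q.2) := pvEquiv_symm_pv q.1 q.2
    exact this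


/-- Component iso with the box product, assuming no diagonal edge. -/
noncomputable def boxCompIso (hd : ¬ diagProp) (X Y : GraphCat) :
    ((X ⊗ Y : GraphCat)) ≅ boxProd X Y where
  hom := ⟨fun u => (pvEquiv X Y).symm u, by
    intro u u' h
    obtain ⟨v, w, rfl⟩ := pv_surj u
    obtain ⟨v', w', rfl⟩ := pv_surj u'
    right
    rw [pvEquiv_symm_pv, pvEquiv_symm_pv]
    obtain ⟨h1, h2⟩ := adj_pv_components h
    rcases h1 with rfl | hv
    · rcases h2 with rfl | hw
      · exact absurd rfl (adj_ne h)
      · exact Or.inr ⟨rfl, hw⟩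
    · rcases h2 with rfl | hw
      · exact Or.inl ⟨hv, rfl⟩
      · exact absurd (diag_implies h hv hw) hd⟩
  inv := ⟨fun q => pv q.1 q.2, by
    rintro ⟨v, w⟩ ⟨v', w'⟩ (⟨hv, rfl⟩ | ⟨rfl, hw⟩)
    · exact Or.inr (adj_pv_fst hv w)
    · exact Or.inr (adj_pv_snd v hw)⟩
  hom_inv_id := hom_ext fun u => by
    obtain ⟨v, w, rfl⟩ := pv_surj u
    show pv ((pvEquiv X Y).symm (pv v w)).1 ((pvEquiv X Y).symm (pv v w)).2 = pv v w
    rw [pvEquiv_symm_pv]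
  inv_hom_id := hom_ext fun q => by
    have : (pvEquiv X Y).symm (pv q.1 q.2) = (q.1, q.2) := pvEquiv_symm_pv q.1 q.2
    exact this


lemma tensor_naturality_aux {X Y X' Y' : GraphCat} (f : X ⟶ X') (g : Y ⟶ Y')
    (u : ((X ⊗ Y : GraphCat)).V) :
    (pvEquiv X' Y').symm ((f ⊗ₘ g).toFun u) =
      (fun q => (f.toFun q.1, g.toFun q.2)) ((pvEquiv X Y).symm u) := by
  obtain ⟨v, w, rfl⟩ := pv_surj u
  rw [pv_tensorHom, pvEquiv_symm_pv, pvEquiv_symm_pv]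

/-- The tensor functor is isomorphic to the categorical product functor. -/
noncomputable def catTensorIso' (hd : diagProp) :
    MonoidalCategory.tensor GraphCat ≅ catFunctor :=
  NatIso.ofComponents (fun p => catCompIso hd p.1 p.2) (by
    intro p q f
    apply hom_ext
    intro u
    exact tensor_naturality_aux f.1 f.2 u)

/-- The tensor functor is isomorphic to the box product functor. -/
noncomputable def boxTensorIso' (hd : ¬ diagProp) :
    MonoidalCategory.tensor GraphCat ≅ boxFunctor :=
  NatIso.ofComponents (fun p => boxCompIso hd p.1 p.2) (by
    intro p q f
    apply hom_ext
    intro u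
    exact tensor_naturality_aux f.1 f.2 u)

theorem classification :
    Nonempty (MonoidalCategory.tensor GraphCat ≅ boxFunctor) ∨
    Nonempty (MonoidalCategory.tensor GraphCat ≅ catFunctor) := by
  by_cases hd : diagProp
  · exact Or.inr ⟨catTensorIso' hd⟩
  · exact Or.inl ⟨boxTensorIso' hd⟩

end Monoidal

end GraphCat
open GraphCat

/-- The category of (reflexive) graphs carries, up to isomorphism of the tensor
product, exactly two closed symmetric monoidal structures: the box product and the
categorical product.  Precisely: (i) for any closed symmetric monoidal structure on
`Graph`, the tensor product functor is naturally isomorphic either to the box product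
or to the categorical product; (ii) and (iii) both the box product and the categorical
product do underlie closed symmetric monoidal structures, each with unit the one-vertex
graph `I₀`; and (iv) these two products are not naturally isomorphic. -/
theorem graph_closed_symmetric_monoidal_classification :
    (∀ M : MonoidalCategory GraphCat,
        @SymmetricCategory GraphCat _ M → @MonoidalClosed GraphCat _ M →
        (Nonempty (@MonoidalCategory.tensor GraphCat _ M ≅ boxFunctor) ∨
         Nonempty (@MonoidalCategory.tensor GraphCat _ M ≅ catFunctor))) ∧
    (∃ M : MonoidalCategory GraphCat,
        Nonempty (@SymmetricCategory GraphCat _ M) ∧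
        Nonempty (@MonoidalClosed GraphCat _ M) ∧
        M.tensorUnit = I0 ∧
        Nonempty (@MonoidalCategory.tensor GraphCat _ M ≅ boxFunctor)) ∧
    (∃ M : MonoidalCategory GraphCat,
        Nonempty (@SymmetricCategory GraphCat _ M) ∧
        Nonempty (@MonoidalClosed GraphCat _ M) ∧
        M.tensorUnit = I0 ∧
        Nonempty (@MonoidalCategory.tensor GraphCat _ M ≅ catFunctor)) ∧
    ¬ Nonempty (boxFunctor ≅ catFunctor) := by
  refine ⟨?_, ⟨boxMC, ⟨boxSymm⟩, ⟨boxClosed⟩, rfl, ⟨boxTensorIso⟩⟩,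
    ⟨catMC, ⟨catSymm⟩, ⟨catClosed⟩, rfl, ⟨catTensorIso⟩⟩, not_box_iso_cat⟩
  intro M S Cl
  letI := M
  letI := S
  letI := Cl
  exact classification
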